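/- arXiv:1801.02697 — 3 statements merged into one kernel-verified Lean document; each statement's English description precedes it below -/
import Mathlib

section
/- Strips estimate: let a ≥ 3 and let x₁,…,x_a be points in a closed axis-parallel square R of side length b > 0 such that no two of the points share the same x-coordinate or the same y-coordinate. Then the minimum spanning tree length satisfies MST(x₁,…,x_a) ≤ 3·b·√a. -/
open MeasureTheory ProbabilityTheory Filter Set

noncomputable section

/-- Euclidean distance between two points of the plane. -/
def eudist (p q : ℝ × ℝ) : ℝ := Real.sqrt ((p.1 - q.1) ^ 2 + (p.2 - q.2) ^ 2)

lemma eudist_comm (p q : ℝ × ℝ) : eudist p q = eudist q p := by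
  unfold eudist
  rw [show (p.1 - q.1) ^ 2 = (q.1 - p.1) ^ 2 by ring,
    show (p.2 - q.2) ^ 2 = (q.2 - p.2) ^ 2 by ring]

/-- Total Euclidean length of the edges of the graph `T` drawn on the points `x`. -/
def treeLength {V : Type*} [Finite V] (x : V → ℝ × ℝ) (T : SimpleGraph V) : ℝ :=
  ∑ e ∈ T.edgeSet.toFinite.toFinset,
    Sym2.lift ⟨fun i j => eudist (x i) (x j), fun _ _ => eudist_comm _ _⟩ e

/-- Length of a minimum spanning tree on the (finitely many) points `x`:
the minimum of the total edge length over all trees on the points. -/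
def mstLength {V : Type*} [Finite V] (x : V → ℝ × ℝ) : ℝ :=
  sInf {L | ∃ T : SimpleGraph V, T.IsTree ∧ L = treeLength x T}

/-- The unit square `S`. -/
def unitSquare : Set (ℝ × ℝ) := Set.Icc (0 : ℝ) 1 ×ˢ Set.Icc (0 : ℝ) 1

/- ### Auxiliary lemmas -/

lemma eudist_nonneg' (p q : ℝ × ℝ) : 0 ≤ eudist p q := Real.sqrt_nonneg _

lemma eudist_le_abs (p q : ℝ × ℝ) : eudist p q ≤ |q.1 - p.1| + |q.2 - p.2| := by
  unfold eudist
  have h1 : (p.1 - q.1) ^ 2 + (p.2 - q.2) ^ 2 ≤ (|q.1 - p.1| + |q.2 - p.2|) ^ 2 := by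
    nlinarith [sq_abs (q.1 - p.1), sq_abs (q.2 - p.2),
      mul_nonneg (abs_nonneg (q.1 - p.1)) (abs_nonneg (q.2 - p.2))]
  calc Real.sqrt ((p.1 - q.1) ^ 2 + (p.2 - q.2) ^ 2)
      ≤ Real.sqrt ((|q.1 - p.1| + |q.2 - p.2|) ^ 2) := Real.sqrt_le_sqrt h1
    _ = |q.1 - p.1| + |q.2 - p.2| :=
        Real.sqrt_sq (add_nonneg (abs_nonneg _) (abs_nonneg _))

lemma treeLength_nonneg' {V : Type*} [Finite V] (x : V → ℝ × ℝ) (T : SimpleGraph V) :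
    0 ≤ treeLength x T :=
  Finset.sum_nonneg fun e _ => Sym2.ind (fun i j => by
    rw [Sym2.lift_mk]; exact eudist_nonneg' _ _) e

lemma mstLength_le_treeLength {V : Type*} [Finite V] (x : V → ℝ × ℝ)
    (T : SimpleGraph V) (hT : T.IsTree) : mstLength x ≤ treeLength x T := by
  apply csInf_le
  · refine ⟨0, ?_⟩
    rintro L ⟨T', hT', rfl⟩
    exact treeLength_nonneg' x T'
  · exact ⟨T, hT, rfl⟩

lemma isAcyclic_of_nat {V : Type*} (G : SimpleGraph V) (ρ : V → ℕ)
    (hinj : Function.Injective ρ)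
    (h : ∀ u v, G.Adj u v → ρ u + 1 = ρ v ∨ ρ v + 1 = ρ u) : G.IsAcyclic := by
  rw [SimpleGraph.isAcyclic_iff_forall_adj_isBridge]
  intro v w hvw
  rw [SimpleGraph.isBridge_iff]
  intro hreach
  set m := min (ρ v) (ρ w) with hm
  have hvw' := h v w hvw
  have oneside : ∀ u u', (G \ SimpleGraph.fromEdgeSet {s(v, w)}).Adj u u' →
      ρ u ≤ m → ρ u' ≤ m := by
    intro u u' hadj hu
    rw [SimpleGraph.sdiff_adj, SimpleGraph.fromEdgeSet_adj] at hadj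
    obtain ⟨hGadj, hnot⟩ := hadj
    have hne : s(u, u') ≠ s(v, w) := by
      intro he; exact hnot ⟨by simp [he], hGadj.ne⟩
    have h1 := h u u' hGadj
    by_contra hu'
    push_neg at hu'
    have e1 : ρ u = m := by omega
    have e2 : ρ u' = m + 1 := by omega
    rcases hvw' with hc | hc
    · have huv : u = v := hinj (by omega)
      have huw : u' = w := hinj (by omega)
      exact hne (by rw [huv, huw])
    · have huv : u = w := hinj (by omega)
      have huw : u' = v := hinj (by omega)
      exact hne (by rw [huv, huw, Sym2.eq_swap])
  have main : ∀ {α β : V} (_ : (G \ SimpleGraph.fromEdgeSet {s(v, w)}).Walk α β),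
      (ρ α ≤ m ↔ ρ β ≤ m) := by
    intro α β q
    induction q with
    | nil => exact Iff.rfl
    | cons hadj q ih => exact (⟨fun h' => ih.mp (oneside _ _ hadj h'),
        fun h' => oneside _ _ hadj.symm (ih.mpr h')⟩)
  rcases hreach with ⟨p⟩
  have := main p
  omega

lemma comap_path_isTree (n : ℕ) (hn : 1 ≤ n) (τ : Equiv.Perm (Fin n)) :
    ((SimpleGraph.pathGraph n).comap ⇑τ.symm.toEmbedding).IsTree := by
  constructor
  · rw [Equiv.coe_toEmbedding, (SimpleGraph.Iso.comap τ.symm (SimpleGraph.pathGraph n)).connected_iff]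
    obtain ⟨m, rfl⟩ : ∃ m, n = m + 1 := ⟨n - 1, by omega⟩
    exact SimpleGraph.pathGraph_connected m
  · apply isAcyclic_of_nat _ (fun u => ((τ.symm u : Fin n) : ℕ))
    · exact fun u u' huu' => τ.symm.injective (Fin.val_injective huu')
    · intro u u' hadj
      rw [SimpleGraph.comap_adj] at hadj
      simp only [Equiv.coe_toEmbedding] at hadj
      exact SimpleGraph.pathGraph_adj.mp hadj

lemma treeLength_comap_path (n : ℕ) (hn : 2 ≤ n) (x : Fin n → ℝ × ℝ)
    (τ : Equiv.Perm (Fin n)) :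
    treeLength x ((SimpleGraph.pathGraph n).comap ⇑τ.symm.toEmbedding)
      = ∑ i ∈ Finset.range (n - 1),
          eudist (x (τ ⟨min i (n - 1), by omega⟩)) (x (τ ⟨min (i + 1) (n - 1), by omega⟩)) := by
  rw [treeLength]
  refine (Finset.sum_bij
    (fun (i : ℕ) (hi : i ∈ Finset.range (n - 1)) =>
      s(τ ⟨min i (n - 1), by omega⟩, τ ⟨min (i + 1) (n - 1), by omega⟩))
    ?_ ?_ ?_ ?_).symm
  · intro i hi
    rw [Finset.mem_range] at hi
    rw [Set.Finite.mem_toFinset, SimpleGraph.mem_edgeSet, SimpleGraph.comap_adj]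
    simp only [Equiv.coe_toEmbedding, Equiv.symm_apply_apply]
    rw [SimpleGraph.pathGraph_adj]
    left
    simp only []
    omega
  · intro i hi j hj heq
    rw [Finset.mem_range] at hi hj
    rw [Sym2.eq_iff] at heq
    rcases heq with ⟨h1, h2⟩ | ⟨h1, h2⟩
    · have h1' : min i (n-1) = min j (n-1) := congrArg Fin.val (τ.injective h1)
      omega
    · have h1' : min i (n-1) = min (j+1) (n-1) := congrArg Fin.val (τ.injective h1)
      have h2' : min (i+1) (n-1) = min j (n-1) := congrArg Fin.val (τ.injective h2)
      omega
  · intro e he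
    induction e using Sym2.ind with
    | _ u v =>
      rw [Set.Finite.mem_toFinset, SimpleGraph.mem_edgeSet, SimpleGraph.comap_adj] at he
      simp only [Equiv.coe_toEmbedding] at he
      rw [SimpleGraph.pathGraph_adj] at he
      have hu := (τ.symm u).isLt
      have hv := (τ.symm v).isLt
      rcases he with hc | hc
      · refine ⟨(τ.symm u : ℕ), Finset.mem_range.mpr (by omega), ?_⟩
        have h1 : (⟨min ((τ.symm u : ℕ)) (n-1), by omega⟩ : Fin n) = τ.symm u :=
          Fin.ext (by simp only []; omega)
        have h2 : (⟨min ((τ.symm u : ℕ) + 1) (n-1), by omega⟩ : Fin n) = τ.symm v :=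
          Fin.ext (by simp only []; omega)
        beta_reduce
        rw [h1, h2, Equiv.apply_symm_apply, Equiv.apply_symm_apply]
      · refine ⟨(τ.symm v : ℕ), Finset.mem_range.mpr (by omega), ?_⟩
        have h1 : (⟨min ((τ.symm v : ℕ)) (n-1), by omega⟩ : Fin n) = τ.symm v :=
          Fin.ext (by simp only []; omega)
        have h2 : (⟨min ((τ.symm v : ℕ) + 1) (n-1), by omega⟩ : Fin n) = τ.symm u :=
          Fin.ext (by simp only []; omega)
        beta_reduce
        rw [h1, h2, Equiv.apply_symm_apply, Equiv.apply_symm_apply, Sym2.eq_swap]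
  · intro i hi
    rw [Sym2.lift_mk]

lemma exists_good_k (a : ℕ) (ha : 3 ≤ a) :
    ∃ k : ℕ, 1 ≤ k ∧ 2 * (k : ℝ) + ((a : ℝ) - 2) / k ≤ 3 * Real.sqrt a := by
  set m : ℝ := (a : ℝ) - 2 with hm
  have hm1 : 1 ≤ m := by
    have : (3 : ℝ) ≤ a := by exact_mod_cast ha
    simp only [hm]; linarith
  set r := Real.sqrt (m / 2) with hr
  have hr2 : r ^ 2 = m / 2 := Real.sq_sqrt (by linarith)
  have hr0 : 0 ≤ r := Real.sqrt_nonneg _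
  have hrpos : (1 : ℝ) / 2 < r := by nlinarith
  refine ⟨⌊r + 1/2⌋₊, Nat.le_floor (by norm_num; linarith), ?_⟩
  set K : ℝ := ((⌊r + 1/2⌋₊ : ℕ) : ℝ) with hK
  have hK1 : (1 : ℝ) ≤ K := by
    have : (1 : ℕ) ≤ ⌊r + 1/2⌋₊ := Nat.le_floor (by norm_num; linarith)
    rw [hK]; exact_mod_cast this
  have hKub : K ≤ r + 1/2 := Nat.floor_le (by linarith)
  have hKlb : r + 1/2 < K + 1 := Nat.lt_floor_add_one _
  have hKpos : (0 : ℝ) < K := by linarith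
  set S := Real.sqrt a with hS
  have hS2 : S ^ 2 = a := Real.sq_sqrt (by positivity)
  have hS0 : 0 ≤ S := Real.sqrt_nonneg _
  have hma : m + 2 = (a : ℝ) := by simp [hm]
  have h3S : 4 * r + 1/2 ≤ 3 * S := by nlinarith [sq_nonneg (r - 1)]
  have prod : (4 * r + 1/2) * K ≤ 3 * S * K :=
    mul_le_mul_of_nonneg_right h3S (le_of_lt hKpos)
  have hKsq : (K - r) ^ 2 ≤ 1 / 4 := by nlinarith
  have key : 2 * K ^ 2 + m ≤ 3 * S * K := by nlinarith
  have heq : 2 * K + m / K = (2 * K ^ 2 + m) / K := by field_simp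
  rw [heq, div_le_iff₀ hKpos]
  exact key

lemma strip_bound (k : ℕ) (hk : 1 ≤ k) (b yc : ℝ) (hb : 0 < b) (h0 : 0 ≤ yc) (h1 : yc ≤ b) :
    ((min (k - 1) ⌊yc * k / b⌋₊ : ℕ) : ℝ) * b ≤ yc * k ∧
      yc * k ≤ (((min (k - 1) ⌊yc * k / b⌋₊ : ℕ) : ℝ) + 1) * b := by
  set t := yc * k / b with ht
  have ht0 : 0 ≤ t := by positivity
  have htk : yc * k = t * b := by rw [ht, div_mul_cancel₀ _ (ne_of_gt hb)]
  constructor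
  · have h2 : ((min (k - 1) ⌊t⌋₊ : ℕ) : ℝ) ≤ (⌊t⌋₊ : ℝ) := by
      exact_mod_cast min_le_right (k - 1) ⌊t⌋₊
    have h3 : (⌊t⌋₊ : ℝ) ≤ t := Nat.floor_le ht0
    rw [htk]; nlinarith
  · rcases le_or_gt (⌊t⌋₊) (k - 1) with hc | hc
    · have hmin : min (k - 1) ⌊t⌋₊ = ⌊t⌋₊ := min_eq_right hc
      rw [hmin, htk]
      have h4 : t < (⌊t⌋₊ : ℝ) + 1 := Nat.lt_floor_add_one t
      nlinarith
    · have hmin : min (k - 1) ⌊t⌋₊ = k - 1 := min_eq_left (le_of_lt hc)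
      rw [hmin]
      have hcast : ((k - 1 : ℕ) : ℝ) + 1 = (k : ℝ) := by
        rw [Nat.cast_sub hk]; push_cast; ring
      rw [hcast]
      have hk' : (1 : ℝ) ≤ (k : ℝ) := by exact_mod_cast hk
      nlinarith

/-- The strips estimate: if `a ≥ 3` points lie in an axis-parallel square of side
length `b`, no two sharing an `x`- or `y`-coordinate, then the MST length is at most
`3 b √a`. -/
theorem strips_estimate (a : ℕ) (ha : 3 ≤ a) (b : ℝ) (hb : 0 < b) (c : ℝ × ℝ)
    (x : Fin a → ℝ × ℝ)
    (hx : ∀ i, x i ∈ Set.Icc c.1 (c.1 + b) ×ˢ Set.Icc c.2 (c.2 + b))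
    (hcoord : ∀ i j, i ≠ j → (x i).1 ≠ (x j).1 ∧ (x i).2 ≠ (x j).2) :
    mstLength x ≤ 3 * b * Real.sqrt a := by
  classical
  have ha2 : 2 ≤ a := by omega
  obtain ⟨k, hk1, hkey⟩ := exists_good_k a ha
  have hk0 : (0 : ℝ) < (k : ℝ) := by exact_mod_cast Nat.lt_of_lt_of_le Nat.zero_lt_one hk1
  set strip : (ℝ × ℝ) → ℕ := fun q => min (k - 1) ⌊(q.2 - c.2) * k / b⌋₊ with hstrip
  set key : Fin a → Lex (ℕ × ℝ) := fun j => toLex (strip (x j), (x j).1) with hkeydef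
  obtain ⟨τ, hmono⟩ : ∃ τ : Equiv.Perm (Fin a), Monotone (key ∘ τ) :=
    ⟨Tuple.sort key, Tuple.monotone_sort key⟩
  set N := a - 1 with hN
  have hNlt : N < a := by omega
  set w : ℕ → ℝ × ℝ := fun i => x (τ ⟨min i N, by omega⟩) with hw
  have hTtree := comap_path_isTree a (by omega) τ
  have hmst := mstLength_le_treeLength x _ hTtree
  have hTlen := treeLength_comap_path a ha2 x τ
  have hsum : treeLength x ((SimpleGraph.pathGraph a).comap ⇑τ.symm.toEmbedding)
      = ∑ i ∈ Finset.range N, eudist (w i) (w (i + 1)) := by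
    rw [hTlen]
  -- coordinate bounds
  have hxmem : ∀ i : ℕ, c.1 ≤ (w i).1 ∧ (w i).1 ≤ c.1 + b ∧
      c.2 ≤ (w i).2 ∧ (w i).2 ≤ c.2 + b := by
    intro i
    have h' := hx (τ ⟨min i N, by omega⟩)
    rw [Set.mem_prod, Set.mem_Icc, Set.mem_Icc] at h'
    exact ⟨h'.1.1, h'.1.2, h'.2.1, h'.2.2⟩
  set st : ℕ → ℕ := fun i => strip (w i) with hst
  -- strip numeric bounds
  have hstb : ∀ i : ℕ, ((st i : ℕ) : ℝ) * b ≤ ((w i).2 - c.2) * k ∧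
      ((w i).2 - c.2) * k ≤ (((st i : ℕ) : ℝ) + 1) * b := by
    intro i
    have := strip_bound k hk1 b ((w i).2 - c.2) hb
      (by linarith [(hxmem i).2.2.1]) (by linarith [(hxmem i).2.2.2])
    exact this
  have hstk : ∀ i : ℕ, (st i : ℝ) ≤ (k : ℝ) - 1 := by
    intro i
    have h1 : st i ≤ k - 1 := min_le_left _ _
    have := Nat.cast_le (α := ℝ) |>.mpr h1
    rw [Nat.cast_sub hk1] at this
    simpa using this
  -- lex monotonicity facts
  have hlex : ∀ i : ℕ, toLex (st i, (w i).1) ≤ toLex (st (i + 1), (w (i + 1)).1) := by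
    intro i
    have hple : (⟨min i N, by omega⟩ : Fin a) ≤ ⟨min (i + 1) N, by omega⟩ := by
      rw [Fin.mk_le_mk]; omega
    exact hmono hple
  have hlex' : ∀ i : ℕ, st i < st (i + 1) ∨
      (st i = st (i + 1) ∧ (w i).1 ≤ (w (i + 1)).1) := by
    intro i
    have := hlex i
    rwa [Prod.Lex.le_iff] at this
  have hstmono : ∀ i : ℕ, st i ≤ st (i + 1) := by
    intro i
    rcases hlex' i with h | ⟨h, _⟩
    · omega
    · omega
  clear_value st w
  set Φ : ℕ → ℝ := fun i => (w i).1 + (2 * b + b / k) * ((st i : ℕ) : ℝ) with hΦ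
  have claim : ∀ i : ℕ, eudist (w i) (w (i + 1)) ≤ Φ (i + 1) - Φ i + b / k := by
    intro i
    have hd := eudist_le_abs (w i) (w (i + 1))
    have hcast : ((st i : ℕ) : ℝ) ≤ ((st (i + 1) : ℕ) : ℝ) := by
      exact_mod_cast hstmono i
    -- vertical bound
    have hYa : (w (i + 1)).2 - (w i).2
        ≤ ((st (i + 1) : ℝ) - (st i : ℝ) + 1) * (b / k) := by
      rw [show ((st (i + 1) : ℝ) - (st i : ℝ) + 1) * (b / k)
          = (((st (i + 1) : ℝ) - (st i : ℝ) + 1) * b) / k by ring,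
        le_div_iff₀ hk0]
      have h1 := (hstb i).1
      have h2 := (hstb (i + 1)).2
      nlinarith
    have hYb : (w i).2 - (w (i + 1)).2
        ≤ ((st (i + 1) : ℝ) - (st i : ℝ) + 1) * (b / k) := by
      rw [show ((st (i + 1) : ℝ) - (st i : ℝ) + 1) * (b / k)
          = (((st (i + 1) : ℝ) - (st i : ℝ) + 1) * b) / k by ring,
        le_div_iff₀ hk0]
      have h1 := (hstb (i + 1)).1
      have h2 := (hstb i).2
      nlinarith
    have hY : |(w (i + 1)).2 - (w i).2|
        ≤ ((st (i + 1) : ℝ) - (st i : ℝ) + 1) * (b / k) := by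
      rw [abs_le]; constructor
      · linarith
      · linarith
    -- horizontal bound
    have hX : |(w (i + 1)).1 - (w i).1|
        ≤ ((w (i + 1)).1 - (w i).1) + 2 * b * ((st (i + 1) : ℝ) - (st i : ℝ)) := by
      rcases hlex' i with hlt | ⟨heq, hle⟩
      · have h1 : (1 : ℝ) ≤ (st (i + 1) : ℝ) - (st i : ℝ) := by
          have : st i + 1 ≤ st (i + 1) := hlt
          have := Nat.cast_le (α := ℝ) |>.mpr this
          push_cast at this
          linarith
        have hXb : |(w (i + 1)).1 - (w i).1| ≤ b := by
          rw [abs_le]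
          constructor
          · have := (hxmem i).2.1; have := (hxmem (i + 1)).1; linarith
          · have := (hxmem (i + 1)).2.1; have := (hxmem i).1; linarith
        have hprod : 2 * b * 1 ≤ 2 * b * ((st (i + 1) : ℝ) - (st i : ℝ)) :=
          mul_le_mul_of_nonneg_left h1 (by linarith)
        have hlo : -b ≤ (w (i + 1)).1 - (w i).1 := (abs_le.mp hXb).1
        linarith [(abs_le.mp hXb).2, le_abs_self ((w (i + 1)).1 - (w i).1)]
      · have h0 : (st (i + 1) : ℝ) - (st i : ℝ) = 0 := by rw [heq]; ring
        rw [abs_of_nonneg (by linarith : (0:ℝ) ≤ (w (i + 1)).1 - (w i).1), h0]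
        linarith
    have hPhi : Φ (i + 1) - Φ i = ((w (i + 1)).1 - (w i).1)
        + (2 * b + b / k) * ((st (i + 1) : ℝ) - (st i : ℝ)) := by
      simp only [hΦ]; ring
    have hexp : ((st (i + 1) : ℝ) - (st i : ℝ) + 1) * (b / k)
        = ((st (i + 1) : ℝ) - (st i : ℝ)) * (b / k) + b / k := by ring
    rw [hPhi]
    rw [hexp] at hY
    nlinarith [hY, hX, hd]
  have hsumle : ∑ i ∈ Finset.range N, eudist (w i) (w (i + 1))
      ≤ ∑ i ∈ Finset.range N, (Φ (i + 1) - Φ i + b / k) :=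
    Finset.sum_le_sum fun i _ => claim i
  have htele : ∑ i ∈ Finset.range N, (Φ (i + 1) - Φ i + b / k)
      = (Φ N - Φ 0) + N * (b / k) := by
    rw [Finset.sum_add_distrib, Finset.sum_range_sub Φ, Finset.sum_const,
      Finset.card_range, nsmul_eq_mul]
  have hPhiN : Φ N - Φ 0 ≤ b + (2 * b + b / k) * ((k : ℝ) - 1) := by
    have h1 : (w N).1 - (w 0).1 ≤ b := by
      have := (hxmem N).2.1; have := (hxmem 0).1; linarith
    have h2 : ((st N : ℕ) : ℝ) - ((st 0 : ℕ) : ℝ) ≤ (k : ℝ) - 1 := by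
      have := hstk N
      have h0 : (0 : ℝ) ≤ ((st 0 : ℕ) : ℝ) := Nat.cast_nonneg _
      linarith
    have h3 : (0 : ℝ) ≤ 2 * b + b / k := by positivity
    have h4 : (2 * b + b / k) * (((st N : ℕ) : ℝ) - ((st 0 : ℕ) : ℝ))
        ≤ (2 * b + b / k) * ((k : ℝ) - 1) := mul_le_mul_of_nonneg_left h2 h3
    simp only [hΦ]
    linarith
  have hNcast : ((N : ℕ) : ℝ) = (a : ℝ) - 1 := by
    rw [hN, Nat.cast_sub (by omega : 1 ≤ a)]; simp
  have hfinal : b + (2 * b + b / k) * ((k : ℝ) - 1) + ((a : ℝ) - 1) * (b / k)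
      = b * (2 * (k : ℝ) + ((a : ℝ) - 2) / k) := by
    field_simp
    ring
  have htotal : treeLength x ((SimpleGraph.pathGraph a).comap ⇑τ.symm.toEmbedding)
      ≤ b * (2 * (k : ℝ) + ((a : ℝ) - 2) / k) := by
    rw [hsum]
    calc ∑ i ∈ Finset.range N, eudist (w i) (w (i + 1))
        ≤ (Φ N - Φ 0) + N * (b / k) := by rw [← htele]; exact hsumle
      _ ≤ b + (2 * b + b / k) * ((k : ℝ) - 1) + ((a : ℝ) - 1) * (b / k) := by
          have hNk : (N : ℝ) * (b / k) = ((a : ℝ) - 1) * (b / k) := by rw [hNcast]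
          linarith [hPhiN, hNk]
      _ = b * (2 * (k : ℝ) + ((a : ℝ) - 2) / k) := hfinal
  have hbound : b * (2 * (k : ℝ) + ((a : ℝ) - 2) / k) ≤ b * (3 * Real.sqrt a) :=
    mul_le_mul_of_nonneg_left hkey (le_of_lt hb)
  calc mstLength x ≤ _ := hmst
    _ ≤ b * (2 * (k : ℝ) + ((a : ℝ) - 2) / k) := htotal
    _ ≤ b * (3 * Real.sqrt a) := hbound
    _ = 3 * b * Real.sqrt a := by ring
end
end

section
/- Binomial–Poisson comparison: fix constants 0 < η₁ ≤ η₂. There is a constant C > 0 depending only on η₁, η₂ such that for all n ≥ 3, all integers N with √n ≤ N ≤ n, every p with η₁/N ≤ p ≤ η₂/N, and every integer k with η₁·n/(2N) ≤ k ≤ 2·η₂·n/N, the binomial probability B(k;n,p) = C(n,k)·p^k·(1−p)^{n−k} and the Poisson probability Poi(k;np) = e^{−np}·(np)^k/k! satisfy Poi(k;np)·(1 − C·n/N²) ≤ B(k;n,p) ≤ Poi(k;np)·(1 + C·n/N²). -/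
open MeasureTheory ProbabilityTheory Filter Set

noncomputable section

/-- The Poisson probability mass function `Poi(k;λ)`. -/
def poiPMF (lam : ℝ) (k : ℕ) : ℝ := Real.exp (-lam) * lam ^ k / k.factorial

/-- The binomial probability mass function `B(k;n,p)`. -/
def binPMF (n k : ℕ) (p : ℝ) : ℝ := (n.choose k : ℝ) * p ^ k * (1 - p) ^ (n - k)

/-- The multinomial probability `B(k₁,k₂;n,p₁,p₂)`. -/
def multPMF (n k₁ k₂ : ℕ) (p₁ p₂ : ℝ) : ℝ :=
  ((n.factorial : ℝ) / (k₁.factorial * k₂.factorial * (n - k₁ - k₂).factorial)) *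
    p₁ ^ k₁ * p₂ ^ k₂ * (1 - p₁ - p₂) ^ (n - k₁ - k₂)

lemma exp_aux_lb {x : ℝ} (hx : 0 ≤ x) (hx2 : x ≤ 1/2) :
    Real.exp (-x - 2*x^2) ≤ 1 - x := by
  have h1 := Real.add_one_le_exp (x + 2*x^2)
  have h2 : Real.exp (-x - 2*x^2) * Real.exp (x + 2*x^2) = 1 := by
    rw [← Real.exp_add]; ring_nf; exact Real.exp_zero
  nlinarith [Real.exp_pos (-x - 2*x^2), Real.exp_pos (x + 2*x^2)]

lemma one_sub_le_exp_neg' (x : ℝ) : 1 - x ≤ Real.exp (-x) := by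
  have := Real.add_one_le_exp (-x); linarith

lemma pow_div_fact_le_exp {x : ℝ} (hx : 0 ≤ x) (k : ℕ) : x ^ k / k.factorial ≤ Real.exp x := by
  have h := Real.sum_le_exp_of_nonneg hx (k+1)
  refine le_trans ?_ h
  have := Finset.single_le_sum (f := fun i => x ^ i / (i.factorial : ℝ))
    (fun i _ => by positivity) (Finset.self_mem_range_succ k)
  simpa using this

lemma choose_le_two_pow' (n k : ℕ) : n.choose k ≤ 2 ^ n := by
  rcases le_or_gt k n with h | h
  · calc n.choose k ≤ ∑ i ∈ Finset.range (n+1), n.choose i :=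
        Finset.single_le_sum (fun i _ => Nat.zero_le _) (by simpa using Nat.lt_succ_of_le h)
    _ = 2 ^ n := Nat.sum_range_choose n
  · simp [Nat.choose_eq_zero_of_lt h]

lemma aux_mono {a b : ℝ} (h0 : 0 ≤ a) (h : a ≤ b) : -b - 2*b^2 ≤ -a - 2*a^2 := by
  nlinarith

set_option maxHeartbeats 2000000 in
lemma good_case (η₁ η₂ : ℝ) (h₁ : 0 < η₁) (h₁₂ : η₁ ≤ η₂) (n N k : ℕ) (p : ℝ)
    (hn : 3 ≤ n) (hN1 : Real.sqrt n ≤ (N:ℝ)) (hN2 : (N : ℝ) ≤ n)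
    (hp1 : η₁ / N ≤ p) (hp2 : p ≤ η₂ / N)
    (hk2 : (k : ℝ) ≤ 2 * η₂ * n / N)
    (hph : p ≤ 1/2) (hkh : (k:ℝ) ≤ (n:ℝ)/2) :
    Real.exp (-(14*η₂^2 * ((n:ℝ)/(N:ℝ)^2))) * poiPMF ((n:ℝ)*p) k ≤ binPMF n k p ∧
    binPMF n k p ≤ Real.exp (14*η₂^2 * ((n:ℝ)/(N:ℝ)^2)) * poiPMF ((n:ℝ)*p) k := by

  have hnR : (0:ℝ) < n := by
    have : (3:ℝ) ≤ n := by exact_mod_cast hn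
    linarith
  have hNpos : (0:ℝ) < N := by
    have : (0:ℝ) < Real.sqrt n := Real.sqrt_pos.mpr hnR
    linarith
  have hη₂ : 0 < η₂ := lt_of_lt_of_le h₁ h₁₂
  have hppos : 0 < p := lt_of_lt_of_le (div_pos h₁ hNpos) hp1
  have hkn : k ≤ n := by
    have : (k:ℝ) ≤ (n:ℝ) := by linarith
    exact_mod_cast this
  have hnN2 : (n:ℝ) ≤ (N:ℝ)^2 := by
    nlinarith [Real.sq_sqrt (le_of_lt hnR), Real.sqrt_nonneg (n:ℝ)]
  set ε : ℝ := (n:ℝ)/(N:ℝ)^2 with hεdef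
  have hεpos : 0 < ε := by positivity
  -- key size bounds
  have hkp : (k:ℝ)*p ≤ 2*η₂^2*ε := by
    have := mul_le_mul hk2 hp2 (le_of_lt hppos) (div_nonneg (by positivity) hNpos.le)
    calc (k:ℝ)*p ≤ (2*η₂*n/N) * (η₂/N) := this
    _ = 2*η₂^2*ε := by rw [hεdef]; ring
  have hk2n : (k:ℝ)^2 ≤ 4*η₂^2*(n:ℝ)*ε := by
    have hk0 : (0:ℝ) ≤ k := Nat.cast_nonneg k
    have := mul_le_mul hk2 hk2 hk0 (div_nonneg (by positivity) hNpos.le)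
    calc (k:ℝ)^2 = (k:ℝ)*(k:ℝ) := sq (k:ℝ) ▸ by ring
    _ ≤ (2*η₂*n/N)*(2*η₂*n/N) := this
    _ = 4*η₂^2*(n:ℝ)*ε := by rw [hεdef]; ring
  have hnp2 : (n:ℝ)*p^2 ≤ η₂^2*ε := by
    have hpη : p ≤ η₂/N := hp2
    have : p^2 ≤ (η₂/N)^2 := by nlinarith
    calc (n:ℝ)*p^2 ≤ (n:ℝ)*(η₂/N)^2 := by nlinarith
    _ = η₂^2*ε := by rw [hεdef]; ring
  -- the product A
  set A : ℝ := ∏ i ∈ Finset.range k, (1 - (i:ℝ)/n) with hAdef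
  -- identity bin = poi * (A * (1-p)^(n-k) * exp (n p))
  have hdesc : (n.descFactorial k : ℝ) = ∏ i ∈ Finset.range k, ((n:ℝ) - i) := by
    rw [Nat.descFactorial_eq_prod_range]
    push_cast
    refine Finset.prod_congr rfl (fun i hi => ?_)
    have : i ≤ n := le_trans (le_of_lt (Finset.mem_range.mp hi)) hkn
    push_cast [Nat.cast_sub this]
    ring
  have hA2 : A = (n.descFactorial k : ℝ) / (n:ℝ)^k := by
    rw [hdesc, hAdef]
    rw [eq_div_iff (by positivity)]
    rw [show ((n:ℝ))^k = ∏ _i ∈ Finset.range k, (n:ℝ) by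
      rw [Finset.prod_const, Finset.card_range]]
    rw [← Finset.prod_mul_distrib]
    exact Finset.prod_congr rfl (fun i _ => by field_simp)
  have hfac : (n.descFactorial k : ℝ) = (k.factorial : ℝ) * (n.choose k : ℝ) := by
    exact_mod_cast congrArg (Nat.cast : ℕ → ℝ) (Nat.descFactorial_eq_factorial_mul_choose n k)
  have hbin_eq : binPMF n k p = poiPMF ((n:ℝ)*p) k * (A * (1-p)^(n-k) * Real.exp ((n:ℝ)*p)) := by
    unfold binPMF poiPMF
    rw [hA2, hfac, Real.exp_neg]
    have hkf : (k.factorial : ℝ) ≠ 0 := by positivity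
    have hnk : ((n:ℝ))^k ≠ 0 := by positivity
    field_simp
    ring
  -- upper bound on A
  have hAub : A ≤ 1 := by
    refine Finset.prod_le_one (fun i hi => ?_) (fun i hi => ?_)
    · have hi' : (i:ℝ) ≤ n := by
        have : i ≤ n := le_trans (le_of_lt (Finset.mem_range.mp hi)) hkn
        exact_mod_cast this
      have : (i:ℝ)/n ≤ 1 := by rw [div_le_one hnR]; exact hi'
      linarith
    · have : (0:ℝ) ≤ (i:ℝ)/n := by positivity
      linarith
  -- lower bound on A
  have hAlb : Real.exp (-(3*(k:ℝ)^2/n)) ≤ A := by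
    have hterm : ∀ i ∈ Finset.range k,
        Real.exp (-((i:ℝ)/n) - 2*((i:ℝ)/n)^2) ≤ 1 - (i:ℝ)/n := by
      intro i hi
      have hik : (i:ℝ) < k := by exact_mod_cast Finset.mem_range.mp hi
      refine exp_aux_lb (by positivity) ?_
      rw [div_le_iff₀ hnR]
      linarith
    calc Real.exp (-(3*(k:ℝ)^2/n))
        ≤ Real.exp (∑ i ∈ Finset.range k, (-((i:ℝ)/n) - 2*((i:ℝ)/n)^2)) := by
          apply Real.exp_le_exp.mpr
          have hbound : ∀ i ∈ Finset.range k,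
              (-((k:ℝ)/n) - 2*((k:ℝ)/n)^2) ≤ (-((i:ℝ)/n) - 2*((i:ℝ)/n)^2) := by
            intro i hi
            have hik : (i:ℝ) ≤ k := by
              have := Finset.mem_range.mp hi; exact_mod_cast le_of_lt this
            have hi0 : (0:ℝ) ≤ i := Nat.cast_nonneg i
            have h1 : (i:ℝ)/n ≤ (k:ℝ)/n := by gcongr
            have h0 : (0:ℝ) ≤ (i:ℝ)/n := by positivity
            exact aux_mono h0 h1
          have hsum := Finset.card_nsmul_le_sum (Finset.range k) _ _ hbound
          rw [Finset.card_range, nsmul_eq_mul] at hsum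
          have hknR : (k:ℝ) ≤ (n:ℝ) := by linarith
          have hk0 : (0:ℝ) ≤ k := Nat.cast_nonneg k
          have heq : (k:ℝ) * (-((k:ℝ)/n) - 2*((k:ℝ)/n)^2)
              = -((k:ℝ)^2/n) - 2*((k:ℝ)^3/(n:ℝ)^2) := by ring
          have h2 : (k:ℝ)^3/(n:ℝ)^2 ≤ (k:ℝ)^2/(n:ℝ) := by
            rw [div_le_div_iff₀ (by positivity) hnR]
            calc (k:ℝ)^3*(n:ℝ) = ((k:ℝ)^2*(n:ℝ))*k := by ring
            _ ≤ ((k:ℝ)^2*(n:ℝ))*n := by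
                apply mul_le_mul_of_nonneg_left hknR
                positivity
            _ = (k:ℝ)^2*(n:ℝ)^2 := by ring
          rw [heq] at hsum
          have h3 : -(3*(k:ℝ)^2/(n:ℝ)) ≤ -((k:ℝ)^2/(n:ℝ)) - 2*((k:ℝ)^3/(n:ℝ)^2) := by
            ring_nf at h2 ⊢
            linarith
          exact le_trans h3 hsum
    _ = ∏ i ∈ Finset.range k, Real.exp (-((i:ℝ)/n) - 2*((i:ℝ)/n)^2) :=
          (Real.exp_sum _ _)
    _ ≤ A := Finset.prod_le_prod (fun i _ => (Real.exp_pos _).le) hterm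
  
  have hk0 : (0:ℝ) ≤ k := Nat.cast_nonneg k
  have hnk_cast : ((n - k : ℕ) : ℝ) = (n:ℝ) - k := by
    push_cast [Nat.cast_sub hkn]; ring
  have h1mp : (0:ℝ) ≤ 1 - p := by linarith
  -- lower bound on (1-p)^(n-k)
  have hplb : Real.exp (-((n:ℝ)*p) - 2*(n:ℝ)*p^2) ≤ (1-p)^(n-k) := by
    have h1 : Real.exp (-p - 2*p^2) ≤ 1 - p := exp_aux_lb hppos.le hph
    have h2 : (Real.exp (-p - 2*p^2))^(n-k) ≤ (1-p)^(n-k) :=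
      pow_le_pow_left₀ (Real.exp_pos _).le h1 _
    have h3 : (Real.exp (-p - 2*p^2))^(n-k) = Real.exp (((n-k:ℕ):ℝ) * (-p - 2*p^2)) := by
      rw [← Real.exp_nat_mul]
    refine le_trans ?_ h2
    rw [h3]
    apply Real.exp_le_exp.mpr
    rw [hnk_cast]
    have hx : 0 ≤ p + 2*p^2 := by positivity
    have hexp : ((n:ℝ) - k) * (-p - 2*p^2)
        = -((n:ℝ)*p) - 2*(n:ℝ)*p^2 + (k:ℝ)*(p + 2*p^2) := by ring
    rw [hexp]
    linarith [mul_nonneg hk0 hx]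
  -- upper bound on (1-p)^(n-k)
  have hpub : (1-p)^(n-k) ≤ Real.exp (((n:ℝ) - k) * (-p)) := by
    have h1 : 1 - p ≤ Real.exp (-p) := one_sub_le_exp_neg' p
    have h2 : (1-p)^(n-k) ≤ (Real.exp (-p))^(n-k) := pow_le_pow_left₀ h1mp h1 _
    have h3 : (Real.exp (-p))^(n-k) = Real.exp (((n-k:ℕ):ℝ) * (-p)) := by
      rw [← Real.exp_nat_mul]
    rw [h3, hnk_cast] at h2
    exact h2
  set R : ℝ := A * ((1-p)^(n-k) * Real.exp ((n:ℝ)*p)) with hRdef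
  have hA0 : (0:ℝ) ≤ A := le_trans (Real.exp_pos _).le hAlb
  have hXE0 : (0:ℝ) ≤ (1-p)^(n-k) * Real.exp ((n:ℝ)*p) :=
    mul_nonneg (pow_nonneg h1mp _) (Real.exp_pos _).le
  -- upper bound on R
  have hRub : R ≤ Real.exp (14*η₂^2*ε) := by
    have t1 : R ≤ 1 * ((1-p)^(n-k) * Real.exp ((n:ℝ)*p)) :=
      mul_le_mul_of_nonneg_right hAub hXE0
    have t2 : (1-p)^(n-k) * Real.exp ((n:ℝ)*p)
        ≤ Real.exp (((n:ℝ) - k) * (-p)) * Real.exp ((n:ℝ)*p) :=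
      mul_le_mul_of_nonneg_right hpub (Real.exp_pos _).le
    have t3 : Real.exp (((n:ℝ) - k) * (-p)) * Real.exp ((n:ℝ)*p)
        = Real.exp ((k:ℝ)*p) := by
      rw [← Real.exp_add]; ring_nf
    have t4 : Real.exp ((k:ℝ)*p) ≤ Real.exp (14*η₂^2*ε) := by
      apply Real.exp_le_exp.mpr
      linarith [hkp, mul_nonneg (sq_nonneg η₂) hεpos.le]
    calc R ≤ 1 * ((1-p)^(n-k) * Real.exp ((n:ℝ)*p)) := t1
    _ = (1-p)^(n-k) * Real.exp ((n:ℝ)*p) := one_mul _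
    _ ≤ Real.exp (((n:ℝ) - k) * (-p)) * Real.exp ((n:ℝ)*p) := t2
    _ = Real.exp ((k:ℝ)*p) := t3
    _ ≤ Real.exp (14*η₂^2*ε) := t4
  -- lower bound on R
  have hRlb : Real.exp (-(14*η₂^2*ε)) ≤ R := by
    have t1 : Real.exp (-(3*(k:ℝ)^2/n)) * (Real.exp (-((n:ℝ)*p) - 2*(n:ℝ)*p^2)
        * Real.exp ((n:ℝ)*p)) ≤ R := by
      apply mul_le_mul hAlb _ _ hA0
      · exact mul_le_mul_of_nonneg_right hplb (Real.exp_pos _).le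
      · positivity
    have t2 : Real.exp (-(3*(k:ℝ)^2/n)) * (Real.exp (-((n:ℝ)*p) - 2*(n:ℝ)*p^2)
        * Real.exp ((n:ℝ)*p)) = Real.exp (-(3*(k:ℝ)^2/n) - 2*(n:ℝ)*p^2) := by
      rw [← Real.exp_add, ← Real.exp_add]; ring_nf
    have hdiv : 3*(k:ℝ)^2/n ≤ 12*η₂^2*ε := by
      rw [div_le_iff₀ hnR]
      nlinarith [hk2n]
    have t3 : -(14*η₂^2*ε) ≤ -(3*(k:ℝ)^2/n) - 2*(n:ℝ)*p^2 := by nlinarith [hnp2]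
    calc Real.exp (-(14*η₂^2*ε)) ≤ Real.exp (-(3*(k:ℝ)^2/n) - 2*(n:ℝ)*p^2) :=
      Real.exp_le_exp.mpr t3
    _ = _ := t2.symm
    _ ≤ R := t1
  -- conclude
  have hpoi_pos : 0 < poiPMF ((n:ℝ)*p) k := by
    unfold poiPMF
    apply div_pos (mul_pos (Real.exp_pos _) (pow_pos (mul_pos hnR hppos) _))
    exact_mod_cast Nat.factorial_pos k
  have hbin_eq' : binPMF n k p = poiPMF ((n:ℝ)*p) k * R := by
    rw [hbin_eq, hRdef]; ring
  constructor
  · rw [hbin_eq']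
    calc Real.exp (-(14*η₂^2 * ε)) * poiPMF ((n:ℝ)*p) k
        = poiPMF ((n:ℝ)*p) k * Real.exp (-(14*η₂^2*ε)) := by ring
    _ ≤ poiPMF ((n:ℝ)*p) k * R := mul_le_mul_of_nonneg_left hRlb hpoi_pos.le
  · rw [hbin_eq']
    calc poiPMF ((n:ℝ)*p) k * R ≤ poiPMF ((n:ℝ)*p) k * Real.exp (14*η₂^2*ε) :=
      mul_le_mul_of_nonneg_left hRub hpoi_pos.le
    _ = Real.exp (14*η₂^2 * ε) * poiPMF ((n:ℝ)*p) k := by ring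

def Kc (η₂ : ℝ) : ℕ := ⌈32*η₂^3⌉₊
def K2c (η₂ : ℝ) : ℕ := ⌈16*η₂^2⌉₊
def Mc (η₂ : ℝ) : ℝ := (2*(1+η₂)*max 1 η₂)^(K2c η₂)
def mc (η₁ η₂ : ℝ) : ℝ := Real.exp (-(16*η₂^3)) * (min η₁ 1)^(Kc η₂) / (Kc η₂).factorial

lemma Mc_pos {η₂ : ℝ} (h : 0 < η₂) : 0 < Mc η₂ := by
  unfold Mc
  apply pow_pos
  have : (1:ℝ) ≤ max 1 η₂ := le_max_left 1 η₂
  nlinarith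

lemma mc_pos {η₁ η₂ : ℝ} (h : 0 < η₁) : 0 < mc η₁ η₂ := by
  unfold mc
  apply div_pos
  · apply mul_pos (Real.exp_pos _)
    apply pow_pos
    exact lt_min h one_pos
  · exact_mod_cast Nat.factorial_pos _

set_option maxHeartbeats 2000000 in
lemma bad_case (η₁ η₂ : ℝ) (h₁ : 0 < η₁) (h₁₂ : η₁ ≤ η₂) (n N k : ℕ) (p : ℝ)
    (hn : 3 ≤ n) (hN1 : Real.sqrt n ≤ (N:ℝ)) (hN2 : (N : ℝ) ≤ n)
    (hp1 : η₁ / N ≤ p) (hp2 : p ≤ η₂ / N)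
    (hk2 : (k : ℝ) ≤ 2 * η₂ * n / N)
    (hNb : (N:ℝ) < 4*η₂) :
    |binPMF n k p| ≤ Mc η₂ ∧ mc η₁ η₂ ≤ poiPMF ((n:ℝ)*p) k ∧ poiPMF ((n:ℝ)*p) k ≤ 1 := by
  have hnR : (0:ℝ) < n := by
    have : (3:ℝ) ≤ n := by exact_mod_cast hn
    linarith
  have hn3 : (3:ℝ) ≤ n := by exact_mod_cast hn
  have hNpos : (0:ℝ) < N := by
    have : (0:ℝ) < Real.sqrt n := Real.sqrt_pos.mpr hnR
    linarith
  have hη₂ : 0 < η₂ := lt_of_lt_of_le h₁ h₁₂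
  have hppos : 0 < p := lt_of_lt_of_le (div_pos h₁ hNpos) hp1
  have hnN2 : (n:ℝ) ≤ (N:ℝ)^2 := by
    nlinarith [Real.sq_sqrt (le_of_lt hnR), Real.sqrt_nonneg (n:ℝ)]
  have hN1' : (1:ℝ) ≤ N := by nlinarith
  have hn16 : (n:ℝ) < 16*η₂^2 := by nlinarith
  have hlam1 : η₁ ≤ (n:ℝ)*p := by
    have h1 : (n:ℝ)*(η₁/N) ≤ (n:ℝ)*p := mul_le_mul_of_nonneg_left hp1 hnR.le
    have h2 : (1:ℝ) ≤ (n:ℝ)/N := by rw [le_div_iff₀ hNpos]; linarith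
    have h3 : (n:ℝ)*(η₁/N) = η₁*((n:ℝ)/N) := by ring
    nlinarith
  have hlampos : 0 < (n:ℝ)*p := lt_of_lt_of_le h₁ hlam1
  have hpη : p ≤ η₂ := le_trans hp2 (div_le_self hη₂.le hN1')
  have hlam2 : (n:ℝ)*p ≤ 16*η₂^3 := by nlinarith
  have hkR : (k:ℝ) ≤ 32*η₂^3 := by
    have h1 : 2*η₂*(n:ℝ)/N ≤ 2*η₂*(n:ℝ) := by
      apply div_le_self (by positivity) hN1'
    nlinarith
  have hkK : k ≤ Kc η₂ := by
    have : (k:ℝ) ≤ (Kc η₂ : ℝ) := le_trans hkR (Nat.le_ceil _)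
    exact_mod_cast this
  have hnK2 : n ≤ K2c η₂ := by
    have : (n:ℝ) ≤ (K2c η₂ : ℝ) := le_trans hn16.le (Nat.le_ceil _)
    exact_mod_cast this
  refine ⟨?_, ?_, ?_⟩
  · -- |bin| ≤ Mc
    rcases le_or_gt k n with hkn | hkn
    · have hch : (n.choose k : ℝ) ≤ 2^n := by
        exact_mod_cast choose_le_two_pow' n k
      have hmax1 : (1:ℝ) ≤ max 1 η₂ := le_max_left 1 η₂
      have hpk : p^k ≤ (max 1 η₂)^n := by
        calc p^k ≤ (max 1 η₂)^k :=
          pow_le_pow_left₀ hppos.le (le_trans hpη (le_max_right 1 η₂)) k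
        _ ≤ (max 1 η₂)^n := pow_le_pow_right₀ hmax1 hkn
      have h1p : |1-p|^(n-k) ≤ (1+η₂)^n := by
        have habs : |1-p| ≤ 1+η₂ := abs_le.mpr ⟨by linarith, by linarith⟩
        calc |1-p|^(n-k) ≤ (1+η₂)^(n-k) := pow_le_pow_left₀ (abs_nonneg _) habs _
        _ ≤ (1+η₂)^n := pow_le_pow_right₀ (by linarith) (Nat.sub_le n k)
      have habs_bin : |binPMF n k p| = (n.choose k : ℝ) * p^k * |1-p|^(n-k) := by
        unfold binPMF
        rw [abs_mul, abs_mul, abs_pow, abs_pow,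
          abs_of_nonneg (by positivity : (0:ℝ) ≤ (n.choose k:ℝ)),
          abs_of_nonneg hppos.le]
      rw [habs_bin]
      calc (n.choose k : ℝ) * p^k * |1-p|^(n-k)
          ≤ 2^n * (max 1 η₂)^n * (1+η₂)^n := by
            apply mul_le_mul (mul_le_mul hch hpk (by positivity) (by positivity))
              h1p (by positivity) (by positivity)
      _ = (2*(1+η₂)*max 1 η₂)^n := by rw [mul_pow, mul_pow]; ring
      _ ≤ (2*(1+η₂)*max 1 η₂)^(K2c η₂) := by
          apply pow_le_pow_right₀ (by nlinarith) hnK2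
      _ = Mc η₂ := rfl
    · unfold binPMF
      rw [Nat.choose_eq_zero_of_lt hkn]
      simp [abs_nonneg]
      exact (Mc_pos hη₂).le
  · -- mc ≤ poi
    unfold poiPMF mc
    have hminK : (0:ℝ) ≤ min η₁ 1 := le_min h₁.le zero_le_one
    apply div_le_div₀ (by positivity)
    · apply mul_le_mul (Real.exp_le_exp.mpr (by linarith))
      · calc (min η₁ 1)^(Kc η₂) ≤ (min η₁ 1)^k :=
            pow_le_pow_of_le_one hminK (min_le_right _ _) hkK
        _ ≤ ((n:ℝ)*p)^k :=
            pow_le_pow_left₀ hminK (le_trans (min_le_left _ _) hlam1) k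
      · positivity
      · exact (Real.exp_pos _).le
    · exact_mod_cast Nat.factorial_pos k
    · exact_mod_cast Nat.factorial_le hkK
  · -- poi ≤ 1
    unfold poiPMF
    have h := pow_div_fact_le_exp hlampos.le k
    calc Real.exp (-((n:ℝ)*p)) * ((n:ℝ)*p)^k / k.factorial
        = Real.exp (-((n:ℝ)*p)) * (((n:ℝ)*p)^k / k.factorial) := by ring
    _ ≤ Real.exp (-((n:ℝ)*p)) * Real.exp ((n:ℝ)*p) :=
        mul_le_mul_of_nonneg_left h (Real.exp_pos _).le
    _ = 1 := by rw [← Real.exp_add]; simp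

lemma exp_sub_one_le' {x : ℝ} (hx : 0 ≤ x) : Real.exp x - 1 ≤ x * Real.exp x := by
  have h1 := Real.add_one_le_exp (-x)
  have h2 : Real.exp x * Real.exp (-x) = 1 := by
    rw [← Real.exp_add]; ring_nf; exact Real.exp_zero
  nlinarith [Real.exp_pos x]

set_option maxHeartbeats 2000000 in
/-- Property (c1): comparison of the binomial and Poisson probability mass functions. -/
theorem binomial_poisson_pmf_comparison (η₁ η₂ : ℝ) (h₁ : 0 < η₁) (h₁₂ : η₁ ≤ η₂) :
    ∃ C : ℝ, 0 < C ∧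
      ∀ (n N k : ℕ) (p : ℝ),
        3 ≤ n → Real.sqrt n ≤ (N : ℝ) → (N : ℝ) ≤ n →
        η₁ / N ≤ p → p ≤ η₂ / N →
        η₁ * n / (2 * N) ≤ (k : ℝ) → (k : ℝ) ≤ 2 * η₂ * n / N →
        poiPMF ((n : ℝ) * p) k * (1 - C * n / (N : ℝ) ^ 2) ≤ binPMF n k p ∧
        binPMF n k p ≤ poiPMF ((n : ℝ) * p) k * (1 + C * n / (N : ℝ) ^ 2) := by
  have hη₂ : 0 < η₂ := lt_of_lt_of_le h₁ h₁₂
  have hMc := Mc_pos hη₂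
  have hmc := mc_pos (η₂ := η₂) h₁
  refine ⟨14*η₂^2 * Real.exp (14*η₂^2) + 16*η₂^2*(1 + Mc η₂)/(mc η₁ η₂), by positivity, ?_⟩
  intro n N k p hn hN1 hN2 hp1 hp2 hk1 hk2
  set C : ℝ := 14*η₂^2 * Real.exp (14*η₂^2) + 16*η₂^2*(1 + Mc η₂)/(mc η₁ η₂) with hCdef
  have hCce : 14*η₂^2 * Real.exp (14*η₂^2) ≤ C := by
    have : (0:ℝ) < 16*η₂^2*(1 + Mc η₂)/(mc η₁ η₂) := by positivity
    rw [hCdef]; linarith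
  have hCbad : 16*η₂^2*(1 + Mc η₂)/(mc η₁ η₂) ≤ C := by
    have : (0:ℝ) < 14*η₂^2 * Real.exp (14*η₂^2) := by positivity
    rw [hCdef]; linarith
  have hCpos : 0 < C := by rw [hCdef]; positivity
  have hCc : 14*η₂^2 ≤ C := by
    have h1 : (1:ℝ) ≤ Real.exp (14*η₂^2) := Real.one_le_exp (by positivity)
    nlinarith [hCce]
  have hnR : (0:ℝ) < n := by
    have : (3:ℝ) ≤ n := by exact_mod_cast hn
    linarith
  have hNpos : (0:ℝ) < N := by
    have : (0:ℝ) < Real.sqrt n := Real.sqrt_pos.mpr hnR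
    linarith
  have hppos : 0 < p := lt_of_lt_of_le (div_pos h₁ hNpos) hp1
  have hnN2 : (n:ℝ) ≤ (N:ℝ)^2 := by
    nlinarith [Real.sq_sqrt (le_of_lt hnR), Real.sqrt_nonneg (n:ℝ)]
  have hε : (0:ℝ) < (n:ℝ)/(N:ℝ)^2 := by positivity
  have hε1 : (n:ℝ)/(N:ℝ)^2 ≤ 1 := by
    rw [div_le_one (by positivity)]; exact hnN2
  have hpoi0 : 0 ≤ poiPMF ((n:ℝ)*p) k := by
    unfold poiPMF
    apply div_nonneg _ (Nat.cast_nonneg _)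
    exact mul_nonneg (Real.exp_pos _).le
      (pow_nonneg (mul_nonneg (Nat.cast_nonneg n) hppos.le) _)
  by_cases hgood : p ≤ 1/2 ∧ (k:ℝ) ≤ (n:ℝ)/2
  · obtain ⟨hph, hkh⟩ := hgood
    obtain ⟨G1, G2⟩ := good_case η₁ η₂ h₁ h₁₂ n N k p hn hN1 hN2 hp1 hp2 hk2 hph hkh
    constructor
    · have key : 1 - C * (n:ℝ) / (N:ℝ)^2
          ≤ Real.exp (-(14*η₂^2 * ((n:ℝ)/(N:ℝ)^2))) := by
        have e1 := Real.add_one_le_exp (-(14*η₂^2 * ((n:ℝ)/(N:ℝ)^2)))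
        have e2 : 14*η₂^2 * ((n:ℝ)/(N:ℝ)^2) ≤ C * (n:ℝ) / (N:ℝ)^2 := by
          have := mul_le_mul_of_nonneg_right hCc hε.le
          calc 14*η₂^2 * ((n:ℝ)/(N:ℝ)^2) ≤ C * ((n:ℝ)/(N:ℝ)^2) := this
          _ = C * (n:ℝ) / (N:ℝ)^2 := by ring
        linarith
      calc poiPMF ((n:ℝ)*p) k * (1 - C * (n:ℝ) / (N:ℝ)^2)
          ≤ poiPMF ((n:ℝ)*p) k * Real.exp (-(14*η₂^2 * ((n:ℝ)/(N:ℝ)^2))) :=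
            mul_le_mul_of_nonneg_left key hpoi0
      _ = Real.exp (-(14*η₂^2 * ((n:ℝ)/(N:ℝ)^2))) * poiPMF ((n:ℝ)*p) k := mul_comm _ _
      _ ≤ binPMF n k p := G1
    · have key : Real.exp (14*η₂^2 * ((n:ℝ)/(N:ℝ)^2)) ≤ 1 + C * (n:ℝ) / (N:ℝ)^2 := by
        have hx0 : (0:ℝ) ≤ 14*η₂^2 * ((n:ℝ)/(N:ℝ)^2) := by positivity
        have hxc : 14*η₂^2 * ((n:ℝ)/(N:ℝ)^2) ≤ 14*η₂^2 := by nlinarith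
        have h3 := exp_sub_one_le' hx0
        have h4 : 14*η₂^2 * ((n:ℝ)/(N:ℝ)^2) * Real.exp (14*η₂^2 * ((n:ℝ)/(N:ℝ)^2))
            ≤ 14*η₂^2 * ((n:ℝ)/(N:ℝ)^2) * Real.exp (14*η₂^2) :=
          mul_le_mul_of_nonneg_left (Real.exp_le_exp.mpr hxc) hx0
        have h5 : 14*η₂^2 * ((n:ℝ)/(N:ℝ)^2) * Real.exp (14*η₂^2)
            ≤ C * (n:ℝ) / (N:ℝ)^2 := by
          have := mul_le_mul_of_nonneg_right hCce hε.le
          calc 14*η₂^2 * ((n:ℝ)/(N:ℝ)^2) * Real.exp (14*η₂^2)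
              = 14*η₂^2 * Real.exp (14*η₂^2) * ((n:ℝ)/(N:ℝ)^2) := by ring
          _ ≤ C * ((n:ℝ)/(N:ℝ)^2) := this
          _ = C * (n:ℝ) / (N:ℝ)^2 := by ring
        linarith
      calc binPMF n k p ≤ Real.exp (14*η₂^2 * ((n:ℝ)/(N:ℝ)^2)) * poiPMF ((n:ℝ)*p) k := G2
      _ = poiPMF ((n:ℝ)*p) k * Real.exp (14*η₂^2 * ((n:ℝ)/(N:ℝ)^2)) := mul_comm _ _
      _ ≤ poiPMF ((n:ℝ)*p) k * (1 + C * (n:ℝ) / (N:ℝ)^2) :=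
            mul_le_mul_of_nonneg_left key hpoi0
  · push_neg at hgood
    have hNb : (N:ℝ) < 4*η₂ := by
      rcases le_or_gt p (1/2) with hp | hp
      · have hk' := hgood hp
        have h6 := lt_of_lt_of_le hk' hk2
        rw [lt_div_iff₀ hNpos] at h6
        nlinarith
      · have h6 : 1/2 < η₂/N := lt_of_lt_of_le hp hp2
        rw [lt_div_iff₀ hNpos] at h6
        linarith
    obtain ⟨hbM, hpoi_m, hpoi_1⟩ := bad_case η₁ η₂ h₁ h₁₂ n N k p hn hN1 hN2 hp1 hp2 hk2 hNb
    have hδ : 1/(16*η₂^2) ≤ (n:ℝ)/(N:ℝ)^2 := by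
      rw [div_le_div_iff₀ (by positivity) (by positivity)]
      have hn3 : (3:ℝ) ≤ n := by exact_mod_cast hn
      nlinarith
    have hkey : 1 + Mc η₂ ≤ C * ((n:ℝ)/(N:ℝ)^2) * poiPMF ((n:ℝ)*p) k := by
      have s1 : 16*η₂^2*(1 + Mc η₂)/(mc η₁ η₂) * (1/(16*η₂^2)) * (mc η₁ η₂)
          ≤ C * ((n:ℝ)/(N:ℝ)^2) * poiPMF ((n:ℝ)*p) k := by
        apply mul_le_mul _ hpoi_m hmc.le
          (mul_nonneg hCpos.le hε.le)
        exact mul_le_mul hCbad hδ (by positivity) hCpos.le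
      have s2 : 16*η₂^2*(1 + Mc η₂)/(mc η₁ η₂) * (1/(16*η₂^2)) * (mc η₁ η₂)
          = 1 + Mc η₂ := by
        field_simp
      linarith
    have hbin1 : binPMF n k p ≤ Mc η₂ := le_trans (le_abs_self _) hbM
    have hbin2 : -(Mc η₂) ≤ binPMF n k p := by
      have := neg_abs_le (binPMF n k p)
      linarith
    have hexp1 : poiPMF ((n:ℝ)*p) k * (1 - C * (n:ℝ) / (N:ℝ)^2)
        = poiPMF ((n:ℝ)*p) k - C * ((n:ℝ)/(N:ℝ)^2) * poiPMF ((n:ℝ)*p) k := by ring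
    have hexp2 : poiPMF ((n:ℝ)*p) k * (1 + C * (n:ℝ) / (N:ℝ)^2)
        = poiPMF ((n:ℝ)*p) k + C * ((n:ℝ)/(N:ℝ)^2) * poiPMF ((n:ℝ)*p) k := by ring
    constructor
    · rw [hexp1]; linarith
    · rw [hexp2]; linarith
end
end

section
/- Multinomial–Poisson comparison: fix constants 0 < η₁ ≤ η₂. There is a constant C > 0 depending only on η₁, η₂ such that for all n ≥ 3, all integers N with √n ≤ N ≤ n, every pair p₁, p₂ with η₁/N ≤ p₁, p₂ ≤ η₂/N and p₁ + p₂ < 1, and all integers k₁, k₂ with η₁·n/(2N) ≤ k₁, k₂ ≤ 2·η₂·n/N, the multinomial probability B(k₁,k₂;n,p₁,p₂) = (n!/(k₁!·k₂!·(n−k₁−k₂)!))·p₁^{k₁}·p₂^{k₂}·(1−p₁−p₂)^{n−k₁−k₂} satisfies Poi(k₁;np₁)·Poi(k₂;np₂)·(1 − C·n/N²) ≤ B(k₁,k₂;n,p₁,p₂) ≤ Poi(k₁;np₁)·Poi(k₂;np₂)·(1 + C·n/N²). -/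
open MeasureTheory ProbabilityTheory Filter Set

noncomputable section

lemma aux_fact_le (n : ℕ) : ∀ s : ℕ, s ≤ n → n.factorial ≤ (n - s).factorial * n ^ s := by
  intro s
  induction s with
  | zero => simp
  | succ s ih =>
    intro hs
    have h1 : s ≤ n := by omega
    have h2 : n - s = (n - (s+1)) + 1 := by omega
    calc n.factorial ≤ (n - s).factorial * n ^ s := ih h1
      _ = ((n - (s+1)) + 1) * (n - (s+1)).factorial * n ^ s := by
          rw [h2, Nat.factorial_succ]
      _ ≤ n * (n - (s+1)).factorial * n ^ s := by
          have : (n - (s+1)) + 1 ≤ n := by omega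
          exact Nat.mul_le_mul_right _ (Nat.mul_le_mul_right _ this)
      _ = (n - (s+1)).factorial * n ^ (s+1) := by ring

lemma aux_fact_ge (n : ℕ) : ∀ s : ℕ, s ≤ n →
    (1 - (s:ℝ)^2 / (2*n)) * (n:ℝ)^s * ((n - s).factorial : ℝ) ≤ (n.factorial : ℝ) := by
  intro s
  induction s with
  | zero => simp
  | succ s ih =>
    intro hs
    have h1 : s ≤ n := by omega
    have hn : 0 < (n:ℝ) := by exact_mod_cast (by omega : 0 < n)
    have hfs : ((n - s).factorial : ℝ) = (((n-(s+1)) : ℕ) + 1) * ((n - (s+1)).factorial : ℝ) := by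
      have : n - s = (n - (s+1)) + 1 := by omega
      rw [this, Nat.factorial_succ]; push_cast; ring
    have hns : ((n-(s+1):ℕ):ℝ) + 1 = (n:ℝ) - s := by
      push_cast [Nat.cast_sub hs]; ring
    have key : (1 - ((s:ℝ)+1)^2 / (2*n)) * (n:ℝ) ≤ (1 - (s:ℝ)^2/(2*n)) * (((n-(s+1):ℕ):ℝ) + 1) := by
      rw [hns]
      have h2n : (0:ℝ) < 2*n := by positivity
      have hsn : (s:ℝ) ≤ (n:ℝ) := by exact_mod_cast h1
      have hs0 : (0:ℝ) ≤ s := by positivity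
      have e1 : ((s:ℝ)+1)^2/(2*(n:ℝ)) * (2*(n:ℝ)) = ((s:ℝ)+1)^2 := div_mul_cancel₀ _ h2n.ne'
      have e2 : (s:ℝ)^2/(2*(n:ℝ)) * (2*(n:ℝ)) = (s:ℝ)^2 := div_mul_cancel₀ _ h2n.ne'
      nlinarith [e1, e2, hn, hsn, hs0, mul_nonneg hs0 (mul_nonneg hs0 hs0)]
    rw [show ((s+1:ℕ):ℝ) = (s:ℝ)+1 by push_cast; ring]
    calc (1 - ((s:ℝ)+1)^2 / (2*n)) * (n:ℝ)^(s+1) * ((n-(s+1)).factorial : ℝ)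
        = ((1 - ((s:ℝ)+1)^2 / (2*n)) * (n:ℝ)) * ((n:ℝ)^s * ((n-(s+1)).factorial : ℝ)) := by
          ring
      _ ≤ ((1 - (s:ℝ)^2/(2*n)) * (((n-(s+1):ℕ):ℝ) + 1)) * ((n:ℝ)^s * ((n-(s+1)).factorial : ℝ)) := by
          apply mul_le_mul_of_nonneg_right key (by positivity)
      _ = (1 - (s:ℝ)^2/(2*n)) * (n:ℝ)^s * ((n - s).factorial : ℝ) := by
          rw [hfs]; ring
      _ ≤ (n.factorial : ℝ) := ih h1

lemma aux_log_lb {σ : ℝ} (h0 : 0 ≤ σ) (h : σ ≤ 1/2) : -σ - 2*σ^2 ≤ Real.log (1-σ) := by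
  have hq : 0 < 1 - σ := by linarith
  have h1 : Real.log (1-σ) = - Real.log (1/(1-σ)) := by
    rw [Real.log_div one_ne_zero hq.ne', Real.log_one]; ring
  rw [h1]
  have h2 : Real.log (1/(1-σ)) ≤ 1/(1-σ) - 1 := Real.log_le_sub_one_of_pos (by positivity)
  have h3 : 1/(1-σ) - 1 = σ/(1-σ) := by field_simp; ring
  have h4 : σ/(1-σ) ≤ σ + 2*σ^2 := by
    rw [div_le_iff₀ hq]; nlinarith [sq_nonneg σ]
  linarith

lemma aux_exp_ub {t : ℝ} (h : 0 ≤ t) : Real.exp t ≤ 1 + t * Real.exp t := by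
  have h1 : 1 - t ≤ Real.exp (-t) := by linarith [Real.add_one_le_exp (-t)]
  have h2 : (1 - t) * Real.exp t ≤ Real.exp (-t) * Real.exp t :=
    mul_le_mul_of_nonneg_right h1 (Real.exp_pos t).le
  rw [← Real.exp_add] at h2
  simp at h2
  nlinarith [Real.exp_pos t]

set_option maxHeartbeats 2000000 in
lemma aux_main (η₁ η₂ A C : ℝ) (K : ℕ) (h₁ : 0 < η₁) (h₁₂ : η₁ ≤ η₂)
    (hAdef : A = 8*η₂^2) (hK16 : 16*η₂^2 ≤ (K:ℝ)) (hK3 : 3 ≤ K)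
    (hC1 : 2*A ≤ C) (hC2 : A*Real.exp A ≤ C)
    (hC3 : (K:ℝ)*((K.factorial:ℝ)*Real.exp (K:ℝ) + 1) ≤ C) :
    ∀ (n N k₁ k₂ : ℕ) (p₁ p₂ : ℝ),
        3 ≤ n → Real.sqrt n ≤ (N : ℝ) → (N : ℝ) ≤ n →
        η₁ / N ≤ p₁ → p₁ ≤ η₂ / N → η₁ / N ≤ p₂ → p₂ ≤ η₂ / N → p₁ + p₂ < 1 →
        η₁ * n / (2 * N) ≤ (k₁ : ℝ) → (k₁ : ℝ) ≤ 2 * η₂ * n / N →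
        η₁ * n / (2 * N) ≤ (k₂ : ℝ) → (k₂ : ℝ) ≤ 2 * η₂ * n / N →
        poiPMF ((n : ℝ) * p₁) k₁ * poiPMF ((n : ℝ) * p₂) k₂ * (1 - C * n / (N : ℝ) ^ 2)
            ≤ multPMF n k₁ k₂ p₁ p₂ ∧
        multPMF n k₁ k₂ p₁ p₂
            ≤ poiPMF ((n : ℝ) * p₁) k₁ * poiPMF ((n : ℝ) * p₂) k₂ * (1 + C * n / (N : ℝ) ^ 2) := by
  have h₂ : 0 < η₂ := lt_of_lt_of_le h₁ h₁₂
  have hA : 0 < A := by rw [hAdef]; positivity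
  have hKpos : (0:ℝ) < K := by
    have : (3:ℝ) ≤ (K:ℝ) := by exact_mod_cast hK3
    linarith
  intro n N k₁ k₂ p₁ p₂ hn hsq hNn hp1l hp1u hp2l hp2u hσ1 hk1l hk1u hk2l hk2u
  have hn3 : (3:ℝ) ≤ (n:ℝ) := by exact_mod_cast hn
  have hnpos : (0:ℝ) < n := by linarith
  have hN1 : (1:ℝ) ≤ (N:ℝ) := by
    have h3 : (1:ℝ) ≤ Real.sqrt n := by
      rw [show (1:ℝ) = Real.sqrt 1 by simp]
      exact Real.sqrt_le_sqrt (by linarith)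
    linarith
  have hNpos : (0:ℝ) < N := by linarith
  have hnN2 : (n:ℝ) ≤ (N:ℝ)^2 := by
    nlinarith [Real.sq_sqrt hnpos.le, Real.sqrt_nonneg (n:ℝ)]
  set u : ℝ := (n:ℝ) / (N:ℝ)^2 with hudef
  have hu0 : 0 < u := by positivity
  have hu1 : u ≤ 1 := by rw [hudef, div_le_one (by positivity)]; linarith
  have hp1 : 0 < p₁ := lt_of_lt_of_le (div_pos h₁ hNpos) hp1l
  have hp2 : 0 < p₂ := lt_of_lt_of_le (div_pos h₁ hNpos) hp2l
  have hq : 0 < 1 - p₁ - p₂ := by linarith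
  have hσ0 : 0 ≤ p₁ + p₂ := by linarith
  -- bounds with N cleared
  have hp1N : p₁ * N ≤ η₂ := by
    have h := hp1u
    rw [le_div_iff₀ hNpos] at h
    linarith
  have hp2N : p₂ * N ≤ η₂ := by
    have h := hp2u
    rw [le_div_iff₀ hNpos] at h
    linarith
  have hk1N : (k₁:ℝ) * N ≤ 2*η₂*n := by
    have h := hk1u
    rw [le_div_iff₀ hNpos] at h
    linarith
  have hk2N : (k₂:ℝ) * N ≤ 2*η₂*n := by
    have h := hk2u
    rw [le_div_iff₀ hNpos] at h
    linarith
  have huN : u * (N:ℝ)^2 = n := div_mul_cancel₀ _ (by positivity)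
  -- positivity of Poisson masses
  have hpoi1 : 0 < poiPMF ((n:ℝ)*p₁) k₁ := by
    unfold poiPMF
    exact div_pos (mul_pos (Real.exp_pos _) (pow_pos (mul_pos hnpos hp1) _))
      (by exact_mod_cast k₁.factorial_pos)
  have hpoi2 : 0 < poiPMF ((n:ℝ)*p₂) k₂ := by
    unfold poiPMF
    exact div_pos (mul_pos (Real.exp_pos _) (pow_pos (mul_pos hnpos hp2) _))
      (by exact_mod_cast k₂.factorial_pos)
  set R : ℝ := (n.factorial:ℝ) * Real.exp ((n:ℝ)*(p₁+p₂)) * (1-p₁-p₂)^(n-k₁-k₂) /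
      (((n-k₁-k₂).factorial:ℝ) * (n:ℝ)^(k₁+k₂)) with hRdef
  have hfacm : (0:ℝ) < ((n-k₁-k₂).factorial:ℝ) := by exact_mod_cast (n-k₁-k₂).factorial_pos
  have hR0 : 0 ≤ R := by
    rw [hRdef]
    apply div_nonneg _ (by positivity)
    have : (0:ℝ) ≤ (1-p₁-p₂)^(n-k₁-k₂) := pow_nonneg hq.le _
    positivity
  have hid : multPMF n k₁ k₂ p₁ p₂ = poiPMF ((n:ℝ)*p₁) k₁ * poiPMF ((n:ℝ)*p₂) k₂ * R := by
    rw [hRdef]; unfold multPMF poiPMF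
    rw [show Real.exp ((n:ℝ)*(p₁+p₂)) = Real.exp ((n:ℝ)*p₁) * Real.exp ((n:ℝ)*p₂) by
      rw [← Real.exp_add]; ring_nf]
    rw [Real.exp_neg, Real.exp_neg, mul_pow, mul_pow, pow_add]
    have e1 := (Real.exp_pos ((n:ℝ)*p₁)).ne'
    have e2 := (Real.exp_pos ((n:ℝ)*p₂)).ne'
    have f1 : ((k₁.factorial:ℝ)) ≠ 0 := by positivity
    have f2 : ((k₂.factorial:ℝ)) ≠ 0 := by positivity
    field_simp
  -- reduce to bounds on R
  suffices hkey : 1 - C * u ≤ R ∧ R ≤ 1 + C * u by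
    rw [mul_div_assoc, ← hudef, hid]
    have hpp : 0 ≤ poiPMF ((n:ℝ)*p₁) k₁ * poiPMF ((n:ℝ)*p₂) k₂ := (mul_pos hpoi1 hpoi2).le
    exact ⟨mul_le_mul_of_nonneg_left hkey.1 hpp, mul_le_mul_of_nonneg_left hkey.2 hpp⟩
  by_cases hNb : 4*η₂ ≤ (N:ℝ)
  · -- main case: N large, s ≤ n, σ ≤ 1/2
    have hσN : (p₁+p₂) * N ≤ 2*η₂ := by linarith only [hp1N, hp2N]
    have hσu : p₁ + p₂ ≤ 1/2 := by nlinarith only [hσN, hNb, hNpos, hσ0, h₂]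
    have hsum : ((k₁:ℝ)+k₂) * N ≤ 4*η₂*n := by linarith only [hk1N, hk2N]
    have hsn : k₁ + k₂ ≤ n := by
      have : ((k₁+k₂:ℕ):ℝ) ≤ (n:ℝ) := by
        push_cast
        nlinarith only [hsum, mul_le_mul_of_nonneg_right hNb hnpos.le, hNpos]
      exact_mod_cast this
    have hmr : ((n-k₁-k₂:ℕ):ℝ) = (n:ℝ) - k₁ - k₂ := by
      have h' : n - k₁ - k₂ = n - (k₁+k₂) := by omega
      rw [h', Nat.cast_sub hsn]; push_cast; ring
    set F : ℝ := (n.factorial:ℝ) / (((n-k₁-k₂).factorial:ℝ) * (n:ℝ)^(k₁+k₂)) with hFdef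
    set E : ℝ := Real.exp ((n:ℝ)*(p₁+p₂)) * (1-p₁-p₂)^(n-k₁-k₂) with hEdef
    have hRFE : R = F * E := by rw [hRdef, hFdef, hEdef]; ring
    have hN2 : (0:ℝ) < (N:ℝ)^2 := by positivity
    have hAuN : A * u * (N:ℝ)^2 = 8*η₂^2*(n:ℝ) := by
      rw [hAdef, hudef]; field_simp
    have hAuN2 : A * u * (2*(n:ℝ)) * (N:ℝ)^2 = 16*η₂^2*(n:ℝ)^2 := by
      rw [hAdef, hudef]; field_simp; ring
    -- F bounds
    have hFle : F ≤ 1 := by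
      rw [hFdef, div_le_one (by positivity)]
      have h := aux_fact_le n (k₁+k₂) hsn
      rw [show n - (k₁+k₂) = n - k₁ - k₂ by omega] at h
      calc (n.factorial:ℝ) ≤ (((n-k₁-k₂).factorial * n^(k₁+k₂) : ℕ):ℝ) := by exact_mod_cast h
        _ = ((n-k₁-k₂).factorial:ℝ) * (n:ℝ)^(k₁+k₂) := by push_cast; ring
    have hsx : ((k₁:ℝ)+k₂)^2 / (2*(n:ℝ)) ≤ A * u := by
      rw [div_le_iff₀ (by positivity)]
      have hk0 : (0:ℝ) ≤ (k₁:ℝ)+k₂ := by positivity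
      have hsq : (((k₁:ℝ)+k₂)*N) * (((k₁:ℝ)+k₂)*N) ≤ (4*η₂*n) * (4*η₂*n) :=
        mul_le_mul hsum hsum (by positivity) (by positivity)
      nlinarith only [hsq, hAuN2, hN2, hnpos]
    have hFge : 1 - A*u ≤ F := by
      have h := aux_fact_ge n (k₁+k₂) hsn
      rw [show n - (k₁+k₂) = n - k₁ - k₂ by omega] at h
      push_cast at h
      rw [hFdef, le_div_iff₀ (by positivity)]
      have h2 : (1 - A*u) * (((n-k₁-k₂).factorial:ℝ) * (n:ℝ)^(k₁+k₂)) ≤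
          (1 - ((k₁:ℝ)+k₂)^2/(2*(n:ℝ))) * (((n-k₁-k₂).factorial:ℝ) * (n:ℝ)^(k₁+k₂)) := by
        apply mul_le_mul_of_nonneg_right (by linarith [hsx]) (by positivity)
      nlinarith only [h, h2]
    -- E bounds
    have hqm : (1-p₁-p₂)^(n-k₁-k₂) = Real.exp (((n-k₁-k₂:ℕ):ℝ) * Real.log (1-p₁-p₂)) := by
      rw [← Real.log_pow, Real.exp_log (pow_pos hq _)]
    have hEexp : E = Real.exp ((n:ℝ)*(p₁+p₂) + ((n-k₁-k₂:ℕ):ℝ) * Real.log (1-p₁-p₂)) := by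
      rw [hEdef, hqm, ← Real.exp_add]
    have hlog_lb : -(p₁+p₂) - 2*(p₁+p₂)^2 ≤ Real.log (1-p₁-p₂) := by
      have h := aux_log_lb hσ0 hσu
      rw [show 1-(p₁+p₂) = 1-p₁-p₂ by ring] at h
      exact h
    have hlog_ub : Real.log (1-p₁-p₂) ≤ -(p₁+p₂) := by
      have := Real.log_le_sub_one_of_pos hq; linarith
    have hm0 : (0:ℝ) ≤ ((n-k₁-k₂:ℕ):ℝ) := by positivity
    have hmn : ((n-k₁-k₂:ℕ):ℝ) ≤ (n:ℝ) := by
      rw [hmr]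
      have : (0:ℝ) ≤ (k₁:ℝ) := by positivity
      have : (0:ℝ) ≤ (k₂:ℝ) := by positivity
      linarith
    have hnm : (n:ℝ) - ((n-k₁-k₂:ℕ):ℝ) = (k₁:ℝ)+k₂ := by rw [hmr]; ring
    have h2nσ : 2*(n:ℝ)*(p₁+p₂)^2 ≤ A*u := by
      have hsq : ((p₁+p₂)*N) * ((p₁+p₂)*N) ≤ (2*η₂) * (2*η₂) :=
        mul_le_mul hσN hσN (by positivity) (by positivity)
      nlinarith only [hsq, hAuN, hN2, hnpos]
    have hsσ : ((k₁:ℝ)+k₂)*(p₁+p₂) ≤ A*u := by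
      have hsq : (((k₁:ℝ)+k₂)*N) * ((p₁+p₂)*N) ≤ (4*η₂*n) * (2*η₂) :=
        mul_le_mul hsum hσN (by positivity) (by positivity)
      nlinarith only [hsq, hAuN, hN2]
    have hexp_lb : -(A*u) ≤ (n:ℝ)*(p₁+p₂) + ((n-k₁-k₂:ℕ):ℝ) * Real.log (1-p₁-p₂) := by
      have t1 : ((n-k₁-k₂:ℕ):ℝ) * (-(p₁+p₂) - 2*(p₁+p₂)^2) ≤
          ((n-k₁-k₂:ℕ):ℝ) * Real.log (1-p₁-p₂) := mul_le_mul_of_nonneg_left hlog_lb hm0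
      have t2 : 0 ≤ ((n:ℝ) - ((n-k₁-k₂:ℕ):ℝ)) * (p₁+p₂) := mul_nonneg (by linarith) hσ0
      have t3 : ((n-k₁-k₂:ℕ):ℝ) * (p₁+p₂)^2 ≤ (n:ℝ) * (p₁+p₂)^2 :=
        mul_le_mul_of_nonneg_right hmn (sq_nonneg _)
      linarith only [t1, t2, t3, h2nσ]
    have hexp_ub : (n:ℝ)*(p₁+p₂) + ((n-k₁-k₂:ℕ):ℝ) * Real.log (1-p₁-p₂) ≤ A*u := by
      have t1 : ((n-k₁-k₂:ℕ):ℝ) * Real.log (1-p₁-p₂) ≤ ((n-k₁-k₂:ℕ):ℝ) * (-(p₁+p₂)) :=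
        mul_le_mul_of_nonneg_left hlog_ub hm0
      have t2 : ((n:ℝ) - ((n-k₁-k₂:ℕ):ℝ)) * (p₁+p₂) ≤ A*u := by rw [hnm]; exact hsσ
      linarith only [t1, t2]
    have hE_lb : 1 - A*u ≤ E := by
      rw [hEexp]
      have h1 := Real.add_one_le_exp (-(A*u))
      have h2 := Real.exp_le_exp.mpr hexp_lb
      linarith only [h1, h2]
    have hE_ub : E ≤ 1 + (A*Real.exp A)*u := by
      rw [hEexp]
      have h1 := Real.exp_le_exp.mpr hexp_ub
      have h2 := aux_exp_ub (t := A*u) (by positivity)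
      have h3 : Real.exp (A*u) ≤ Real.exp A := Real.exp_le_exp.mpr (by nlinarith only [hu1, hu0, hA])
      have h4 : (A*u) * Real.exp (A*u) ≤ (A*u) * Real.exp A :=
        mul_le_mul_of_nonneg_left h3 (by positivity)
      linarith only [h1, h2, h4]
    have hEnn : 0 ≤ E := by rw [hEexp]; exact (Real.exp_pos _).le
    have hFnn : 0 ≤ F := by rw [hFdef]; positivity
    have hC1x := hC1
    have hC2x := hC2
    constructor
    · -- lower bound
      rw [hRFE]
      by_cases hc : 0 ≤ 1 - A*u
      · have hprod : (1-A*u)*(1-A*u) ≤ F * E :=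
          mul_le_mul hFge hE_lb hc (le_trans hc hFge)
        nlinarith only [hprod, hC1x, hu0, sq_nonneg (A*u)]
      · push_neg at hc
        have : 1 - C*u ≤ 0 := by nlinarith only [hC1x, hu0, hA, hc]
        linarith only [this, mul_nonneg hFnn hEnn]
    · -- upper bound
      rw [hRFE]
      have h5 : F*E ≤ E := mul_le_of_le_one_left hEnn hFle
      nlinarith only [h5, hE_ub, hC2x, hu0]
  · -- small case: N < 4η₂, hence n bounded
    push_neg at hNb
    have hnK : n ≤ K := by
      have h16 : (n:ℝ) ≤ 16*η₂^2 := by nlinarith only [hnN2, hNpos, hNb]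
      exact_mod_cast le_trans h16 hK16
    have hnKr : (n:ℝ) ≤ (K:ℝ) := by exact_mod_cast hnK
    have hRle : R ≤ (K.factorial:ℝ) * Real.exp (K:ℝ) := by
      rw [hRdef]
      have a1 : (1-p₁-p₂)^(n-k₁-k₂) ≤ 1 := pow_le_one₀ hq.le (by linarith)
      have a2 : Real.exp ((n:ℝ)*(p₁+p₂)) ≤ Real.exp (K:ℝ) :=
        Real.exp_le_exp.mpr (by nlinarith only [hσ1, hσ0, hnpos, hnKr])
      have a3 : (n.factorial:ℝ) ≤ (K.factorial:ℝ) := by exact_mod_cast Nat.factorial_le hnK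
      have b1 : (n.factorial:ℝ) * Real.exp ((n:ℝ)*(p₁+p₂)) ≤ (K.factorial:ℝ) * Real.exp (K:ℝ) :=
        mul_le_mul a3 a2 (Real.exp_pos _).le (by positivity)
      have hnum : (n.factorial:ℝ) * Real.exp ((n:ℝ)*(p₁+p₂)) * (1-p₁-p₂)^(n-k₁-k₂) ≤
          (K.factorial:ℝ) * Real.exp (K:ℝ) := by
        calc (n.factorial:ℝ) * Real.exp ((n:ℝ)*(p₁+p₂)) * (1-p₁-p₂)^(n-k₁-k₂)
            ≤ ((K.factorial:ℝ) * Real.exp (K:ℝ)) * 1 := by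
              apply mul_le_mul b1 a1 (pow_nonneg hq.le _) (by positivity)
          _ = (K.factorial:ℝ) * Real.exp (K:ℝ) := by ring
      have hden : 1 ≤ ((n-k₁-k₂).factorial:ℝ) * (n:ℝ)^(k₁+k₂) := by
        have d1 : (1:ℝ) ≤ ((n-k₁-k₂).factorial:ℝ) := by
          exact_mod_cast (n-k₁-k₂).factorial_pos
        have d2 : (1:ℝ) ≤ (n:ℝ)^(k₁+k₂) := one_le_pow₀ (by linarith)
        nlinarith only [d1, d2]
      have hnn : 0 ≤ (n.factorial:ℝ) * Real.exp ((n:ℝ)*(p₁+p₂)) * (1-p₁-p₂)^(n-k₁-k₂) := by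
        have := pow_nonneg hq.le (n-k₁-k₂); positivity
      calc (n.factorial:ℝ) * Real.exp ((n:ℝ)*(p₁+p₂)) * (1-p₁-p₂)^(n-k₁-k₂) /
            (((n-k₁-k₂).factorial:ℝ) * (n:ℝ)^(k₁+k₂))
          ≤ (n.factorial:ℝ) * Real.exp ((n:ℝ)*(p₁+p₂)) * (1-p₁-p₂)^(n-k₁-k₂) :=
            div_le_self hnn hden
        _ ≤ (K.factorial:ℝ) * Real.exp (K:ℝ) := hnum
    have huK : 1/(K:ℝ) ≤ u := by
      rw [hudef, div_le_div_iff₀ hKpos (by positivity)]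
      nlinarith only [hNn, hnpos, hnKr, hNpos, hnN2]
    have hCu2 : (K.factorial:ℝ)*Real.exp (K:ℝ) + 1 ≤ C*u := by
      have h1 : (K:ℝ)*((K.factorial:ℝ)*Real.exp (K:ℝ) + 1) * (1/(K:ℝ)) =
          (K.factorial:ℝ)*Real.exp (K:ℝ) + 1 := by field_simp
      have h2 : (K:ℝ)*((K.factorial:ℝ)*Real.exp (K:ℝ) + 1) * (1/(K:ℝ)) ≤
          (K:ℝ)*((K.factorial:ℝ)*Real.exp (K:ℝ) + 1) * u :=
        mul_le_mul_of_nonneg_left huK (by positivity)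
      have h3 : (K:ℝ)*((K.factorial:ℝ)*Real.exp (K:ℝ) + 1) * u ≤ C*u := by
        apply mul_le_mul_of_nonneg_right _ hu0.le
        have c2 : 0 ≤ A * Real.exp A := by positivity
        linarith only [hC3, hA, mul_pos hA (Real.exp_pos A)]
      linarith
    have hfK : (0:ℝ) ≤ (K.factorial:ℝ)*Real.exp (K:ℝ) := by positivity
    exact ⟨by linarith [hR0], by linarith⟩

/-- Property (c2): comparison of the multinomial probability with the product of
Poisson probability mass functions. -/
theorem multinomial_poisson_pmf_comparison (η₁ η₂ : ℝ) (h₁ : 0 < η₁) (h₁₂ : η₁ ≤ η₂) :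
    ∃ C : ℝ, 0 < C ∧
      ∀ (n N k₁ k₂ : ℕ) (p₁ p₂ : ℝ),
        3 ≤ n → Real.sqrt n ≤ (N : ℝ) → (N : ℝ) ≤ n →
        η₁ / N ≤ p₁ → p₁ ≤ η₂ / N → η₁ / N ≤ p₂ → p₂ ≤ η₂ / N → p₁ + p₂ < 1 →
        η₁ * n / (2 * N) ≤ (k₁ : ℝ) → (k₁ : ℝ) ≤ 2 * η₂ * n / N →
        η₁ * n / (2 * N) ≤ (k₂ : ℝ) → (k₂ : ℝ) ≤ 2 * η₂ * n / N →
        poiPMF ((n : ℝ) * p₁) k₁ * poiPMF ((n : ℝ) * p₂) k₂ * (1 - C * n / (N : ℝ) ^ 2)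
            ≤ multPMF n k₁ k₂ p₁ p₂ ∧
        multPMF n k₁ k₂ p₁ p₂
            ≤ poiPMF ((n : ℝ) * p₁) k₁ * poiPMF ((n : ℝ) * p₂) k₂ * (1 + C * n / (N : ℝ) ^ 2) := by
  have h₂ : 0 < η₂ := lt_of_lt_of_le h₁ h₁₂
  obtain ⟨K, hKval⟩ : ∃ K : ℕ, K = ⌊16*η₂^2⌋₊ + 3 := ⟨_, rfl⟩
  obtain ⟨A, hAdef⟩ : ∃ A : ℝ, A = 8*η₂^2 := ⟨_, rfl⟩
  obtain ⟨C, hCdef⟩ : ∃ C : ℝ,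
      C = (K:ℝ) * ((K.factorial:ℝ) * Real.exp (K:ℝ) + 1) + A * Real.exp A + 2*A + 1 := ⟨_, rfl⟩
  have hA : 0 < A := by rw [hAdef]; positivity
  have hK16 : 16*η₂^2 ≤ (K:ℝ) := by
    rw [hKval]
    push_cast
    have := Nat.lt_floor_add_one (16*η₂^2)
    linarith
  have hK3 : 3 ≤ K := by omega
  have hCpos : 0 < C := by
    rw [hCdef]
    have : (0:ℝ) < K := by positivity
    positivity
  refine ⟨C, hCpos, ?_⟩
  apply aux_main η₁ η₂ A C K h₁ h₁₂ hAdef hK16 hK3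
  · rw [hCdef]
    have c1 : 0 ≤ (K:ℝ) * ((K.factorial:ℝ) * Real.exp (K:ℝ) + 1) := by positivity
    have c2 : 0 ≤ A * Real.exp A := by positivity
    linarith
  · rw [hCdef]
    have c1 : 0 ≤ (K:ℝ) * ((K.factorial:ℝ) * Real.exp (K:ℝ) + 1) := by positivity
    linarith [hA]
  · rw [hCdef]
    have c2 : 0 ≤ A * Real.exp A := by positivity
    linarith [hA]
end
end
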